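/- Orthogonality of phase-twisted invariant vectors for different speeds (Lemma 7.2). Assume Hypotheses (SL) and (SLO). Fix n ∈ ℤ^D with n ≠ 0 and (k, f) ∈ ℝ^D × ℝ, and for u ∈ ℝ \ {0} set θ(u) := k·n − f‖n‖₁/u (k·n = Σᵢ kᵢnᵢ). Let v, w ∈ ℝ \ {0} with v ≠ w. If Ψ ∈ H satisfies U(n, ‖n‖₁/v)Ψ = e^{iθ(v)}Ψ and ⟨Ω, Ψ⟩ = 0, and Ψ' ∈ H satisfies U(n, ‖n‖₁/w)Ψ' = e^{iθ(w)}Ψ' and ⟨Ω, Ψ'⟩ = 0, then ⟨Ψ, Ψ'⟩ = 0. -/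

import Mathlib

set_option maxHeartbeats 1000000

open Filter MeasureTheory Topology

noncomputable def l1 {D : ℕ} (n : Fin D → ℤ) : ℝ := ∑ i, |(n i : ℝ)|

variable {D : ℕ} {H : Type*} [NormedAddCommGroup H] [InnerProductSpace ℂ H]
  [CompleteSpace H] [TopologicalSpace.SeparableSpace H]

/-- **Orthogonality of phase-twisted invariant vectors for different speeds** (Lemma 7.2). -/
theorem twisted_invariant_vectors_orthogonal
    (U : (Fin D → ℤ) × ℝ → H ≃ₗᵢ[ℂ] H)
    (hU0 : U 0 = LinearIsometryEquiv.refl ℂ H)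
    (hUadd : ∀ p q : (Fin D → ℤ) × ℝ, U (p + q) = (U q).trans (U p))
    (Ω : H) (hΩ : ‖Ω‖ = 1) (hΩinv : ∀ p, U p Ω = Ω)
    (vc : ℝ) (hvc : 0 < vc)
    (hSL : ∀ (m : Fin D → ℤ) (t : ℝ), m ≠ 0 → vc * |t| < l1 m →
      ∀ ψ : H, U (m, t) ψ = ψ → ∃ c : ℂ, ψ = c • Ω)
    (hSLO : ∀ (m : Fin D → ℤ) (t : ℝ), m ≠ 0 → vc * |t| < l1 m →
      ∀ θ : ℝ, (∀ j : ℤ, θ ≠ 2 * Real.pi * j) →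
      ∀ ψ : H, U (m, t) ψ = Complex.exp (Complex.I * (θ : ℂ)) • ψ → ψ = 0)
    (n : Fin D → ℤ) (hn : n ≠ 0) (k : Fin D → ℝ) (f : ℝ)
    (v w : ℝ) (hv : v ≠ 0) (hw : w ≠ 0) (hvw : v ≠ w)
    (Ψ Ψ' : H)
    (hΨ : U (n, l1 n / v) Ψ =
      Complex.exp (Complex.I * ((((∑ i, k i * (n i : ℝ)) - f * l1 n / v) : ℝ) : ℂ)) • Ψ)
    (hΨΩ : (inner ℂ Ω Ψ : ℂ) = 0)
    (hΨ' : U (n, l1 n / w) Ψ' =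
      Complex.exp (Complex.I * ((((∑ i, k i * (n i : ℝ)) - f * l1 n / w) : ℝ) : ℂ)) • Ψ')
    (hΨ'Ω : (inner ℂ Ω Ψ' : ℂ) = 0) :
    (inner ℂ Ψ Ψ' : ℂ) = 0 := by
  classical
  -- basic facts
  have hL : 0 < l1 n := by
    obtain ⟨i, hi⟩ : ∃ i, n i ≠ 0 := by
      by_contra hco; push_neg at hco; exact hn (funext hco)
    refine Finset.sum_pos' (fun j _ => abs_nonneg _) ⟨i, Finset.mem_univ i, ?_⟩
    have : (n i : ℝ) ≠ 0 := Int.cast_ne_zero.mpr hi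
    exact abs_pos.mpr this
  have Uadd' : ∀ (p q : (Fin D → ℤ) × ℝ) (x : H), U (p + q) x = U p (U q x) := by
    intro p q x; rw [hUadd]; rfl
  have Uinv : ∀ (p : (Fin D → ℤ) × ℝ) (x : H), U (-p) (U p x) = x := by
    intro p x
    have h1 : U (-p + p) x = U (-p) (U p x) := Uadd' (-p) p x
    rw [neg_add_cancel, hU0] at h1
    exact h1.symm
  have hconj : ∀ r : ℝ, (starRingEnd ℂ) (Complex.exp (Complex.I * r)) =
      Complex.exp (-(Complex.I * r)) := by
    intro r
    rw [← Complex.exp_conj]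
    congr 1
    simp [Complex.conj_ofReal]
  have hexp_ne : ∀ z : ℂ, Complex.exp z ≠ 0 := Complex.exp_ne_zero
  -- eigenvector relation for integer multiples
  have eig : ∀ (p : (Fin D → ℤ) × ℝ) (θ : ℝ) (ψ : H),
      U p ψ = Complex.exp (Complex.I * θ) • ψ →
      ∀ m : ℤ, U (m • p) ψ = Complex.exp (Complex.I * ((m * θ : ℝ) : ℂ)) • ψ := by
    intro p θ ψ hψ
    have hnat : ∀ N : ℕ, U ((N : ℤ) • p) ψ
        = Complex.exp (Complex.I * (((N : ℝ) * θ : ℝ) : ℂ)) • ψ := by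
      intro N
      induction N with
      | zero => simp [hU0]
      | succ N ih =>
        have hsm : ((N + 1 : ℕ) : ℤ) • p = p + (N : ℤ) • p := by
          push_cast
          rw [add_smul, one_smul, add_comm]
        rw [hsm, Uadd', ih, _root_.map_smul, hψ, smul_smul, ← Complex.exp_add]
        congr 2
        push_cast
        ring
    intro m
    rcases le_or_gt 0 m with hm | hm
    · obtain ⟨N, rfl⟩ := Int.eq_ofNat_of_zero_le hm
      simpa using hnat N
    · obtain ⟨N, rfl⟩ : ∃ N : ℕ, m = -(N : ℤ) := ⟨m.natAbs, by omega⟩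
      have h1 := hnat N
      have h2 : U (-((N : ℤ) • p)) (U ((N : ℤ) • p) ψ) = ψ := Uinv _ ψ
      rw [h1, _root_.map_smul] at h2
      have h3 : U ((-(N : ℤ)) • p) ψ
          = (Complex.exp (Complex.I * (((N : ℝ) * θ : ℝ) : ℂ)))⁻¹ • ψ := by
        rw [neg_smul]
        have h4 := congrArg (fun x => (Complex.exp (Complex.I * (((N : ℝ) * θ : ℝ) : ℂ)))⁻¹ • x) h2
        rw [smul_smul, inv_mul_cancel₀ (hexp_ne _), one_smul] at h4
        exact h4
      rw [h3, ← Complex.exp_neg]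
      congr 2
      push_cast
      ring
  -- names for phases and group elements
  set θv : ℝ := (∑ i, k i * (n i : ℝ)) - f * l1 n / v with hθvdef
  set θw : ℝ := (∑ i, k i * (n i : ℝ)) - f * l1 n / w with hθwdef
  set gv : (Fin D → ℤ) × ℝ := (n, l1 n / v) with hgvdef
  set gw : (Fin D → ℤ) × ℝ := (n, l1 n / w) with hgwdef
  have hΨz := eig gv θv Ψ hΨ
  have hΨ'z := eig gw θw Ψ' hΨ'
  -- the key invariance identity
  have key : ∀ a b : ℤ,
      (inner ℂ Ψ (Complex.exp (Complex.I * (((b * θw - a * θv : ℝ)) : ℂ)) •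
        U (a • gv - b • gw) Ψ') : ℂ) = inner ℂ Ψ Ψ' := by
    intro a b
    have hdecomp : a • gv = (a • gv - b • gw) + b • gw := by abel
    have hsplit : U (a • gv) Ψ' = Complex.exp (Complex.I * (((b : ℝ) * θw : ℝ) : ℂ)) •
        U (a • gv - b • gw) Ψ' := by
      conv_lhs => rw [hdecomp]
      rw [Uadd', hΨ'z b, _root_.map_smul]
    have h1 : (inner ℂ Ψ Ψ' : ℂ) = inner ℂ (U (a • gv) Ψ) (U (a • gv) Ψ') :=
      ((U (a • gv)).inner_map_map Ψ Ψ').symm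
    rw [h1, hΨz a, hsplit, inner_smul_left, inner_smul_right, inner_smul_right, hconj,
      ← mul_assoc, ← Complex.exp_add]
    congr 2
    push_cast
    ring
  -- choose the integers
  have htvw : l1 n / v ≠ l1 n / w := by
    intro hcon
    apply hvw
    field_simp at hcon
    exact hcon.symm
  set s : ℝ := l1 n / v - l1 n / w with hsdef
  have hs : s ≠ 0 := sub_ne_zero.mpr htvw
  obtain ⟨c, hc⟩ := exists_nat_gt (vc * |s| / l1 n)
  have hcpos : 0 < c := by
    have h0 : (0 : ℝ) ≤ vc * |s| / l1 n := by positivity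
    exact_mod_cast Nat.cast_pos.mp (lt_of_le_of_lt h0 hc)
  have hcL : vc * |s| < (c : ℝ) * l1 n := by
    rw [div_lt_iff₀ hL] at hc
    linarith
  set b : ℤ := round ((-((c : ℝ) * (l1 n / v))) / s) with hbdef
  set τ : ℝ := (c : ℝ) * (l1 n / v) + (b : ℝ) * s with hτdef
  have hτle : |τ| ≤ |s| := by
    have h1 : τ = s * ((b : ℝ) - (-((c : ℝ) * (l1 n / v))) / s) := by
      field_simp [hτdef]
      rw [hτdef, add_mul, mul_assoc (c : ℝ) (l1 n / v) v, div_mul_cancel₀ _ hv]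
      ring
    rw [h1, abs_mul]
    have h2 : |(b : ℝ) - (-((c : ℝ) * (l1 n / v))) / s| ≤ 1 := by
      rw [abs_sub_comm, hbdef]
      exact (abs_sub_round _).trans (by norm_num)
    calc |s| * |(b : ℝ) - (-((c : ℝ) * (l1 n / v))) / s| ≤ |s| * 1 :=
          mul_le_mul_of_nonneg_left h2 (abs_nonneg _)
      _ = |s| := mul_one _
  have hτlt : vc * |τ| < (c : ℝ) * l1 n :=
    lt_of_le_of_lt (mul_le_mul_of_nonneg_left hτle hvc.le) hcL
  set a : ℤ := b + (c : ℤ) with hadef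
  set q : (Fin D → ℤ) × ℝ := a • gv - b • gw with hqdef
  have hq : q = ((c : ℤ) • n, τ) := by
    have h1 : q.1 = (c : ℤ) • n := by
      show a • gv.1 - b • gw.1 = (c : ℤ) • n
      rw [hgvdef, hgwdef]
      show a • n - b • n = (c : ℤ) • n
      rw [← sub_smul, hadef, add_sub_cancel_left]
    have h2 : q.2 = τ := by
      show a • gv.2 - b • gw.2 = τ
      rw [hgvdef, hgwdef]
      show a • (l1 n / v) - b • (l1 n / w) = τ
      rw [zsmul_eq_mul, zsmul_eq_mul, hτdef, hsdef, hadef]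
      push_cast
      ring
    rw [← h1, ← h2]
  have hmne : ((c : ℤ) • n) ≠ 0 := by
    intro hcon
    apply hn
    funext i
    have h1 := congrFun hcon i
    have h2 : (c : ℤ) * n i = 0 := h1
    have h3 : (c : ℤ) ≠ 0 := by exact_mod_cast hcpos.ne'
    exact (mul_eq_zero.mp h2).resolve_left h3
  have hl1smul : l1 ((c : ℤ) • n) = (c : ℝ) * l1 n := by
    simp only [l1, Pi.smul_apply, smul_eq_mul, Int.cast_mul, abs_mul, Int.cast_natCast,
      Nat.abs_cast]
    rw [← Finset.mul_sum]
  have hspace : vc * |τ| < l1 ((c : ℤ) • n) := by rw [hl1smul]; exact hτlt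
  -- the contraction B
  set T : H →L[ℂ] H := (U q).toLinearIsometry.toContinuousLinearMap with hTdef
  set δ : ℝ := (b : ℝ) * θw - (a : ℝ) * θv with hδdef
  set B : H →L[ℂ] H := Complex.exp (Complex.I * (δ : ℂ)) • T with hBdef
  have hTapp : ∀ x : H, T x = U q x := fun x => rfl
  have hBapp : ∀ x : H, B x = Complex.exp (Complex.I * (δ : ℂ)) • U q x := by
    intro x; rw [hBdef]; rfl
  have hBnorm : ‖B‖ ≤ 1 := by
    rw [hBdef, norm_smul]
    have h1 : ‖Complex.exp (Complex.I * (δ : ℂ))‖ = 1 := by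
      rw [Complex.norm_exp]
      simp
    rw [h1, one_mul]
    exact (U q).toLinearIsometry.norm_toContinuousLinearMap_le
  have hiter : ∀ (m : ℕ) (x : H), B^[m] x
      = Complex.exp (Complex.I * (((m : ℝ) * δ : ℝ) : ℂ)) • U ((m : ℤ) • q) x := by
    intro m
    induction m with
    | zero => intro x; simp [hU0]
    | succ m ih =>
      intro x
      rw [Function.iterate_succ_apply', ih x, hBapp, _root_.map_smul, smul_smul, ← Complex.exp_add]
      have hsm : ((m + 1 : ℕ) : ℤ) • q = q + (m : ℤ) • q := by
        push_cast
        rw [add_smul, one_smul, add_comm]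
      rw [← Uadd', ← hsm]
      congr 2
      push_cast
      ring
  -- inner products with iterates are constant
  have hconst : ∀ m : ℕ, (inner ℂ Ψ (B^[m] Ψ') : ℂ) = inner ℂ Ψ Ψ' := by
    intro m
    rw [hiter m Ψ']
    have hq2 : (m : ℤ) • q = ((m : ℤ) * a) • gv - ((m : ℤ) * b) • gw := by
      rw [hqdef, smul_sub, smul_smul, smul_smul]
    have hδ2 : ((m : ℝ) * δ : ℝ) = (((m : ℤ) * b : ℤ) : ℝ) * θw - (((m : ℤ) * a : ℤ) : ℝ) * θv := by
      rw [hδdef]; push_cast; ring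
    rw [hq2, hδ2]
    exact key ((m : ℤ) * a) ((m : ℤ) * b)
  -- mean ergodic theorem
  have hME := ContinuousLinearMap.tendsto_birkhoffAverage_orthogonalProjection B hBnorm Ψ'
  set P : H := (Submodule.orthogonalProjectionOnto (B.eqLocus (1 : H →L[ℂ] H)) Ψ' : H) with hPdef
  have htend : Tendsto (fun N => (inner ℂ Ψ (birkhoffAverage ℂ B _root_.id N Ψ') : ℂ)) atTop
      (𝓝 (inner ℂ Ψ P)) := (tendsto_const_nhds.inner hME)
  have heval : ∀ N : ℕ, 1 ≤ N →
      (inner ℂ Ψ (birkhoffAverage ℂ B _root_.id N Ψ') : ℂ) = inner ℂ Ψ Ψ' := by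
    intro N hN
    have hNne : (N : ℂ) ≠ 0 := by exact_mod_cast Nat.one_le_iff_ne_zero.mp hN
    rw [birkhoffAverage, birkhoffSum, inner_smul_right, inner_sum]
    have : ∀ m ∈ Finset.range N, (inner ℂ Ψ (_root_.id (B^[m] Ψ')) : ℂ) = inner ℂ Ψ Ψ' := by
      intro m _; exact hconst m
    rw [Finset.sum_congr rfl this, Finset.sum_const, Finset.card_range, nsmul_eq_mul,
      ← mul_assoc, inv_mul_cancel₀ hNne, one_mul]
  have hlim : (inner ℂ Ψ Ψ' : ℂ) = inner ℂ Ψ P := by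
    have h1 : Tendsto (fun N => (inner ℂ Ψ (birkhoffAverage ℂ B _root_.id N Ψ') : ℂ)) atTop
        (𝓝 (inner ℂ Ψ Ψ' : ℂ)) := by
      refine Tendsto.congr' ?_ (tendsto_const_nhds (x := (inner ℂ Ψ Ψ' : ℂ)))
      filter_upwards [eventually_ge_atTop 1] with N hN
      exact (heval N hN).symm
    exact tendsto_nhds_unique h1 htend
  -- P is a fixed point of B, hence an eigenvector of U q
  have hPfix : B P = P := by
    have hmem := (Submodule.orthogonalProjectionOnto (B.eqLocus (1 : H →L[ℂ] H)) Ψ').2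
    rw [LinearMap.mem_eqLocus] at hmem
    simpa [hPdef] using hmem
  have hUqP : U q P = Complex.exp (Complex.I * (((-δ : ℝ)) : ℂ)) • P := by
    rw [hBapp] at hPfix
    have := congrArg (fun x => Complex.exp (Complex.I * (((-δ : ℝ)) : ℂ)) • x) hPfix
    rw [smul_smul, ← Complex.exp_add] at this
    have hexp0 : Complex.I * (((-δ : ℝ)) : ℂ) + Complex.I * (δ : ℂ) = 0 := by
      push_cast; ring
    rw [hexp0, Complex.exp_zero, one_smul] at this
    exact this
  -- conclude that P is a multiple of Ω
  have hPΩ : ∃ c0 : ℂ, P = c0 • Ω := by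
    rw [hq] at hUqP
    by_cases hcase : ∀ j : ℤ, (-δ : ℝ) ≠ 2 * Real.pi * j
    · have := hSLO ((c : ℤ) • n) τ hmne hspace (-δ) hcase P hUqP
      exact ⟨0, by rw [this, zero_smul]⟩
    · push_neg at hcase
      obtain ⟨j, hj⟩ := hcase
      have hexp1 : Complex.exp (Complex.I * (((-δ : ℝ)) : ℂ)) = 1 := by
        rw [hj]
        have : Complex.I * (((2 * Real.pi * j : ℝ)) : ℂ) = (j : ℂ) * (2 * Real.pi * Complex.I) := by
          push_cast; ring
        rw [this, Complex.exp_int_mul_two_pi_mul_I]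
      rw [hexp1, one_smul] at hUqP
      exact hSL ((c : ℤ) • n) τ hmne hspace P hUqP
  obtain ⟨c0, hc0⟩ := hPΩ
  rw [hlim, hc0, inner_smul_right, ← inner_conj_symm, hΨΩ, map_zero, mul_zero]
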